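/- For a compact metric space X and α > 0 and a finite set S ⊂ ℕ, the set E(α,S) of pairs (T,f) ∈ C(X,X) × C(X,ℝ) such that I^S_{T,f}(x) ≠ I^S_{T,f}(y) whenever d(T^j(x), T^j(y)) ≥ α for all j ∈ S, is open in C(X,X) × C(X,ℝ) with the uniform metrics. -/

import Mathlib

private lemma iter_cont {X : Type*} [MetricSpace X] [CompactSpace X] (j : ℕ) :
    Continuous (fun q : C(X, X) × X => (q.1 : X → X)^[j] q.2) := by
  induction j with
  | zero => simpa using continuous_snd
  | succ j ih =>
    simp only [Function.iterate_succ_apply']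
    exact continuous_eval.comp (continuous_fst.prodMk ih)

theorem alpha_trajectory_embedding_pairs_open {X : Type*} [MetricSpace X] [CompactSpace X]
    (α : ℝ) (hα : 0 < α) (S : Finset ℕ) :
    IsOpen {p : C(X, X) × C(X, ℝ) |
      ∀ x y : X, (∀ j ∈ S, α ≤ dist ((p.1 : X → X)^[j] x) ((p.1 : X → X)^[j] y)) →
        ∃ j ∈ S, p.2 ((p.1 : X → X)^[j] x) ≠ p.2 ((p.1 : X → X)^[j] y)} := by
  set κ : Set ((C(X, X) × C(X, ℝ)) × (X × X)) :=
    {q | (∀ j ∈ S, α ≤ dist ((q.1.1 : X → X)^[j] q.2.1) ((q.1.1 : X → X)^[j] q.2.2)) ∧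
         ∀ j ∈ S, q.1.2 ((q.1.1 : X → X)^[j] q.2.1) = q.1.2 ((q.1.1 : X → X)^[j] q.2.2)}
    with hκdef
  have hc1 : ∀ j : ℕ, Continuous
      (fun q : (C(X, X) × C(X, ℝ)) × (X × X) => (q.1.1 : X → X)^[j] q.2.1) := fun j =>
    (iter_cont j).comp ((continuous_fst.comp continuous_fst).prodMk
      (continuous_fst.comp continuous_snd))
  have hc2 : ∀ j : ℕ, Continuous
      (fun q : (C(X, X) × C(X, ℝ)) × (X × X) => (q.1.1 : X → X)^[j] q.2.2) := fun j =>
    (iter_cont j).comp ((continuous_fst.comp continuous_fst).prodMk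
      (continuous_snd.comp continuous_snd))
  have hev : ∀ (j : ℕ) (g : (C(X, X) × C(X, ℝ)) × (X × X) → X), Continuous g →
      Continuous (fun q : (C(X, X) × C(X, ℝ)) × (X × X) => q.1.2 (g q)) := fun j g hg =>
    continuous_eval.comp ((continuous_snd.comp continuous_fst).prodMk hg)
  have hκ : IsClosed κ := by
    have : κ = (⋂ j ∈ S, {q : (C(X, X) × C(X, ℝ)) × (X × X) |
          α ≤ dist ((q.1.1 : X → X)^[j] q.2.1) ((q.1.1 : X → X)^[j] q.2.2)}) ∩
        (⋂ j ∈ S, {q : (C(X, X) × C(X, ℝ)) × (X × X) |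
          q.1.2 ((q.1.1 : X → X)^[j] q.2.1) = q.1.2 ((q.1.1 : X → X)^[j] q.2.2)}) := by
      ext q
      simp [hκdef, Set.mem_iInter]
    rw [this]
    exact IsClosed.inter
      (isClosed_biInter fun j _ => isClosed_le continuous_const ((hc1 j).dist (hc2 j)))
      (isClosed_biInter fun j _ => isClosed_eq (hev j _ (hc1 j)) (hev j _ (hc2 j)))
  have hproj : IsClosed (Prod.fst '' κ) := isClosedMap_fst_of_compactSpace _ hκ
  have hset : {p : C(X, X) × C(X, ℝ) |
      ∀ x y : X, (∀ j ∈ S, α ≤ dist ((p.1 : X → X)^[j] x) ((p.1 : X → X)^[j] y)) →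
        ∃ j ∈ S, p.2 ((p.1 : X → X)^[j] x) ≠ p.2 ((p.1 : X → X)^[j] y)} =
      (Prod.fst '' κ)ᶜ := by
    ext p
    simp only [Set.mem_compl_iff, Set.mem_image, Set.mem_setOf_eq, hκdef, not_exists, not_and]
    constructor
    · rintro h ⟨q1, x, y⟩ ⟨hd, he⟩ rfl
      obtain ⟨j, hj, hne⟩ := h x y hd
      exact hne (he j hj)
    · intro h x y hd
      by_contra hcon
      push_neg at hcon
      exact h (p, x, y) ⟨hd, hcon⟩ rfl
  rw [hset]
  exact hproj.isOpen_compl
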